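/- Let β ∈ (1,2) be an algebraic integer and α ∈ ℚ(β) ∩ (0,2-β). If every rational number in J_{β,α} is eventually periodic under T⁺_{β,α}, then every Galois conjugate γ ≠ β of β satisfies |γ| ≤ 1; i.e., β is a Pisot or Salem number. -/

import Mathlib

noncomputable def Tplus (β α : ℝ) (x : ℝ) : ℝ :=
  if x < (1 - α) / β then β * x + α else β * x + α - 1

open IntermediateField Polynomial Finset

noncomputable def Complex.abs : AbsoluteValue ℂ ℝ := IsAbsoluteValue.toAbsoluteValue (norm : ℂ → ℝ)

lemma Complex.norm_eq_abs (z : ℂ) : ‖z‖ = Complex.abs z := rfl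

lemma Complex.abs_ofReal (r : ℝ) : Complex.abs (r : ℂ) = |r| := by
  rw [← Complex.norm_eq_abs, Complex.norm_real, Real.norm_eq_abs]

/-- The `k`-th digit of the orbit of `x` under `Tplus β α`. -/
noncomputable def dgt (β α x : ℝ) (k : ℕ) : ℝ :=
  if (Tplus β α)^[k] x < (1 - α) / β then 0 else 1

open scoped Classical in
/-- Extension of an algebra hom on `ℚ⟮β⟯` to all of `ℝ` (by junk value `0`). -/
noncomputable def PhiR (β : ℝ) (φ : ℚ⟮β⟯ →ₐ[ℚ] ℂ) (t : ℝ) : ℂ :=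
  if h : t ∈ ℚ⟮β⟯ then φ ⟨t, h⟩ else 0

/-- Partial digit sum in base `γ`. -/
noncomputable def Ssum (β α x : ℝ) (γ : ℂ) (k : ℕ) : ℂ :=
  ∑ i ∈ Finset.range k, (dgt β α x i : ℂ) * (γ⁻¹) ^ (i + 1)

lemma iterate_step (β α x : ℝ) (k : ℕ) :
    (Tplus β α)^[k+1] x = β * (Tplus β α)^[k] x + α - dgt β α x k := by
  rw [Function.iterate_succ_apply']
  by_cases h : (Tplus β α)^[k] x < (1 - α) / β
  · simp only [Tplus, dgt, if_pos h] <;> ring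
  · simp only [Tplus, dgt, if_neg h] <;> ring

lemma dgt_cases (β α x : ℝ) (k : ℕ) : dgt β α x k = 0 ∨ dgt β α x k = 1 := by
  unfold dgt; split_ifs <;> simp

lemma PhiR_mem (β : ℝ) (φ : ℚ⟮β⟯ →ₐ[ℚ] ℂ) {t : ℝ} (h : t ∈ ℚ⟮β⟯) :
    PhiR β φ t = φ ⟨t, h⟩ := dif_pos h

lemma PhiR_rat (β : ℝ) (φ : ℚ⟮β⟯ →ₐ[ℚ] ℂ) (q : ℚ) : PhiR β φ (q : ℝ) = (q : ℂ) := by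
  rw [PhiR_mem β φ (SubfieldClass.ratCast_mem _ q)]
  have h : (⟨(q:ℝ), SubfieldClass.ratCast_mem _ q⟩ : ℚ⟮β⟯) = (q : ℚ⟮β⟯) := by
    ext; push_cast; rfl
  rw [h]; simp

lemma orbit_mem (β α : ℝ) (hαK : α ∈ ℚ⟮β⟯) {x : ℝ} (hx : x ∈ ℚ⟮β⟯) (k : ℕ) :
    (Tplus β α)^[k] x ∈ ℚ⟮β⟯ := by
  induction k with
  | zero => exact hx
  | succ n ih =>
      rw [iterate_step]
      have hβm : β ∈ ℚ⟮β⟯ := IntermediateField.mem_adjoin_simple_self ℚ β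
      rcases dgt_cases β α x n with h | h <;> rw [h]
      · simpa using add_mem (mul_mem hβm ih) hαK
      · exact sub_mem (add_mem (mul_mem hβm ih) hαK) (one_mem _)

lemma iterate_eventually (f : ℝ → ℝ) (x : ℝ) {m n : ℕ} (hnm : n < m)
    (h : f^[m] x = f^[n] x) : ∀ k, ∃ j, j ≤ m ∧ f^[k] x = f^[j] x := by
  intro k
  induction k using Nat.strong_induction_on with
  | _ k IH =>
    by_cases hk : k ≤ m
    · exact ⟨k, hk, rfl⟩
    · push_neg at hk
      have h1 : f^[k] x = f^[k - (m - n)] x := by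
        have h2 : k = (k - m) + m := (Nat.sub_add_cancel hk.le).symm
        calc f^[k] x = f^[(k - m) + m] x := by rw [← h2]
          _ = f^[k - m] (f^[m] x) := Function.iterate_add_apply ..
          _ = f^[k - m] (f^[n] x) := by rw [h]
          _ = f^[(k - m) + n] x := (Function.iterate_add_apply ..).symm
          _ = f^[k - (m - n)] x := by congr 1; omega
      have hlt : k - (m - n) < k := by omega
      obtain ⟨j, hj, he⟩ := IH _ hlt
      exact ⟨j, hj, h1.trans he⟩

/-- The constant `c = φ(α)/(γ-1)`. -/
noncomputable def cconst (β α : ℝ) (γ : ℂ) (φ : ℚ⟮β⟯ →ₐ[ℚ] ℂ) (hαK : α ∈ ℚ⟮β⟯) : ℂ :=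
  φ ⟨α, hαK⟩ / (γ - 1)

lemma gamma_ne_one (γ : ℂ) (hγ1 : 1 < Complex.abs γ) : γ ≠ 1 := by
  intro h; rw [h] at hγ1; simp at hγ1

lemma gamma_ne_zero (γ : ℂ) (hγ1 : 1 < Complex.abs γ) : γ ≠ 0 := by
  intro h; rw [h] at hγ1; simp at hγ1; linarith

lemma hc_mul (β α : ℝ) (γ : ℂ) (φ : ℚ⟮β⟯ →ₐ[ℚ] ℂ) (hαK : α ∈ ℚ⟮β⟯)
    (hγ1 : 1 < Complex.abs γ) :
    γ * cconst β α γ φ hαK = φ ⟨α, hαK⟩ + cconst β α γ φ hαK := by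
  have hne : γ - 1 ≠ 0 := sub_ne_zero.mpr (gamma_ne_one γ hγ1)
  unfold cconst
  field_simp
  ring

lemma u_rec (β α : ℝ) (γ : ℂ) (φ : ℚ⟮β⟯ →ₐ[ℚ] ℂ) (hαK : α ∈ ℚ⟮β⟯)
    (hγ1 : 1 < Complex.abs γ) (hφβ : φ (AdjoinSimple.gen ℚ β) = γ)
    {x : ℝ} (hx : x ∈ ℚ⟮β⟯) (k : ℕ) :
    PhiR β φ ((Tplus β α)^[k+1] x) + cconst β α γ φ hαK =
      γ * (PhiR β φ ((Tplus β α)^[k] x) + cconst β α γ φ hαK) - (dgt β α x k : ℂ) := by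
  have hXk : (Tplus β α)^[k] x ∈ ℚ⟮β⟯ := orbit_mem β α hαK hx k
  have hβm : β ∈ ℚ⟮β⟯ := IntermediateField.mem_adjoin_simple_self ℚ β
  have hstep := iterate_step β α x k
  have hc := hc_mul β α γ φ hαK hγ1
  rcases dgt_cases β α x k with h | h <;> rw [h] at hstep ⊢
  · have hmem : β * (Tplus β α)^[k] x + α - 0 ∈ ℚ⟮β⟯ := by
      simpa using add_mem (mul_mem hβm hXk) hαK
    rw [hstep, PhiR_mem β φ hmem, PhiR_mem β φ hXk]
    have heq : (⟨β * (Tplus β α)^[k] x + α - 0, hmem⟩ : ℚ⟮β⟯) =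
        AdjoinSimple.gen ℚ β * ⟨(Tplus β α)^[k] x, hXk⟩ + ⟨α, hαK⟩ := by
      ext; simp [AdjoinSimple.gen]
    rw [heq, map_add, map_mul, hφβ]
    push_cast
    linear_combination -hc
  · have hmem : β * (Tplus β α)^[k] x + α - 1 ∈ ℚ⟮β⟯ :=
      sub_mem (add_mem (mul_mem hβm hXk) hαK) (one_mem _)
    rw [hstep, PhiR_mem β φ hmem, PhiR_mem β φ hXk]
    have heq : (⟨β * (Tplus β α)^[k] x + α - 1, hmem⟩ : ℚ⟮β⟯) =
        AdjoinSimple.gen ℚ β * ⟨(Tplus β α)^[k] x, hXk⟩ + ⟨α, hαK⟩ - 1 := by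
      ext; simp [AdjoinSimple.gen]
    rw [heq, map_sub, map_add, map_mul, hφβ, map_one]
    push_cast
    linear_combination -hc

lemma u_ident (β α : ℝ) (γ : ℂ) (φ : ℚ⟮β⟯ →ₐ[ℚ] ℂ) (hαK : α ∈ ℚ⟮β⟯)
    (hγ1 : 1 < Complex.abs γ) (hφβ : φ (AdjoinSimple.gen ℚ β) = γ)
    {x : ℝ} (hx : x ∈ ℚ⟮β⟯) (k : ℕ) :
    PhiR β φ x + cconst β α γ φ hαK - Ssum β α x γ k =
      (γ⁻¹) ^ k * (PhiR β φ ((Tplus β α)^[k] x) + cconst β α γ φ hαK) := by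
  induction k with
  | zero => simp [Ssum]
  | succ k ih =>
      have hrec := u_rec β α γ φ hαK hγ1 hφβ hx k
      have hS : Ssum β α x γ (k+1) = Ssum β α x γ k + (dgt β α x k : ℂ) * (γ⁻¹) ^ (k+1) := by
        unfold Ssum; rw [Finset.sum_range_succ]
      have hγ0 : γ ≠ 0 := gamma_ne_zero γ hγ1
      have hinv : (γ⁻¹ : ℂ) ^ (k+1) * γ = (γ⁻¹) ^ k := by
        rw [pow_succ]
        field_simp
      calc PhiR β φ x + cconst β α γ φ hαK - Ssum β α x γ (k+1)
          = (PhiR β φ x + cconst β α γ φ hαK - Ssum β α x γ k)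
              - (dgt β α x k : ℂ) * (γ⁻¹) ^ (k+1) := by rw [hS]; ring
        _ = (γ⁻¹) ^ k * (PhiR β φ ((Tplus β α)^[k] x) + cconst β α γ φ hαK)
              - (dgt β α x k : ℂ) * (γ⁻¹) ^ (k+1) := by rw [ih]
        _ = (γ⁻¹) ^ (k+1) * (γ * (PhiR β φ ((Tplus β α)^[k] x) + cconst β α γ φ hαK)
              - (dgt β α x k : ℂ)) := by
              rw [mul_sub, ← mul_assoc, hinv]
              ring
        _ = (γ⁻¹) ^ (k+1) * (PhiR β φ ((Tplus β α)^[k+1] x) + cconst β α γ φ hαK) := by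
              rw [hrec]

lemma exists_bound (β α : ℝ) (γ : ℂ) (φ : ℚ⟮β⟯ →ₐ[ℚ] ℂ) (hαK : α ∈ ℚ⟮β⟯) {x : ℝ}
    (hp : ∃ m n : ℕ, n < m ∧ (Tplus β α)^[m] x = (Tplus β α)^[n] x) :
    ∃ B : ℝ, 0 ≤ B ∧ ∀ k,
      Complex.abs (PhiR β φ ((Tplus β α)^[k] x) + cconst β α γ φ hαK) ≤ B := by
  obtain ⟨m, n, hnm, h⟩ := hp
  set F : ℕ → ℝ := fun j => Complex.abs (PhiR β φ ((Tplus β α)^[j] x) + cconst β α γ φ hαK)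
    with hF
  have hne : (Finset.range (m+1)).Nonempty := ⟨0, by simp⟩
  refine ⟨Finset.sup' (Finset.range (m+1)) hne F, ?_, ?_⟩
  · exact le_trans (AbsoluteValue.nonneg _ _)
      (Finset.le_sup' F (by simp : 0 ∈ Finset.range (m+1)))
  · intro k
    obtain ⟨j, hj, he⟩ := iterate_eventually (Tplus β α) x hnm h k
    have h2 : F k = F j := by simp only [hF]; rw [he]
    calc F k = F j := h2
      _ ≤ Finset.sup' (Finset.range (m+1)) hne F :=
        Finset.le_sup' F (Finset.mem_range.mpr (Nat.lt_succ_of_le hj))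

lemma abs_le_R0 (β α : ℝ) (γ : ℂ) (φ : ℚ⟮β⟯ →ₐ[ℚ] ℂ) (hαK : α ∈ ℚ⟮β⟯)
    (hγ1 : 1 < Complex.abs γ) (hφβ : φ (AdjoinSimple.gen ℚ β) = γ)
    {x : ℝ} (hx : x ∈ ℚ⟮β⟯)
    (hp : ∃ m n : ℕ, n < m ∧ (Tplus β α)^[m] x = (Tplus β α)^[n] x) (k : ℕ) :
    Complex.abs (PhiR β φ ((Tplus β α)^[k] x) + cconst β α γ φ hαK) ≤
      1 / (Complex.abs γ - 1) := by
  obtain ⟨B, hB0, hB⟩ := exists_bound β α γ φ hαK hp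
  have hgpos : (0:ℝ) < Complex.abs γ - 1 := by linarith
  have hRg : (1 / (Complex.abs γ - 1)) * (Complex.abs γ - 1) = 1 := by field_simp
  by_contra hcon
  push_neg at hcon
  set u : ℕ → ℂ := fun j => PhiR β φ ((Tplus β α)^[j] x) + cconst β α γ φ hαK with hu
  set R : ℝ := 1 / (Complex.abs γ - 1) with hR
  have hk0 : R < Complex.abs (u k) := hcon
  set t : ℝ := Complex.abs (u k) - R with ht
  have htpos : 0 < t := by rw [ht]; linarith
  have grow : ∀ j : ℕ, R + (Complex.abs γ) ^ j * t ≤ Complex.abs (u (k + j)) := by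
    intro j
    induction j with
    | zero => simp [ht]
    | succ j ih =>
        have hrec : u (k + j + 1) = γ * u (k + j) - (dgt β α x (k + j) : ℂ) :=
          u_rec β α γ φ hαK hγ1 hφβ hx (k + j)
        have habs : Complex.abs γ * Complex.abs (u (k + j)) - 1 ≤
            Complex.abs (u (k + j + 1)) := by
          rw [hrec]
          have h1 : Complex.abs (γ * u (k+j)) - Complex.abs ((dgt β α x (k+j) : ℝ) : ℂ) ≤
              Complex.abs (γ * u (k+j) - (dgt β α x (k+j) : ℂ)) := by
            have h0 := norm_sub_norm_le (γ * u (k+j)) ((dgt β α x (k+j) : ℝ) : ℂ)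
            simpa [Complex.norm_eq_abs, Complex.abs_ofReal] using h0
          have h2 : Complex.abs ((dgt β α x (k+j) : ℝ) : ℂ) ≤ 1 := by
            rcases dgt_cases β α x (k+j) with h | h <;> rw [h] <;> simp
          have h3 : Complex.abs (γ * u (k+j)) = Complex.abs γ * Complex.abs (u (k+j)) :=
            map_mul _ _ _
          linarith
        have h4 : Complex.abs γ * (R + (Complex.abs γ) ^ j * t) - 1 ≤
            Complex.abs γ * Complex.abs (u (k+j)) - 1 := by
          have h5 := mul_le_mul_of_nonneg_left ih (by linarith : (0:ℝ) ≤ Complex.abs γ)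
          linarith
        have h6 : Complex.abs γ * (R + (Complex.abs γ) ^ j * t) - 1 =
            R + (Complex.abs γ) ^ (j+1) * t := by
          have h7 : Complex.abs γ * R - 1 = R := by
            rw [hR]; field_simp; ring
          rw [pow_succ]; nlinarith [h7]
        calc R + (Complex.abs γ) ^ (j+1) * t
            = Complex.abs γ * (R + (Complex.abs γ) ^ j * t) - 1 := h6.symm
          _ ≤ Complex.abs γ * Complex.abs (u (k+j)) - 1 := h4
          _ ≤ Complex.abs (u (k+j+1)) := habs
  obtain ⟨j, hj⟩ := pow_unbounded_of_one_lt ((B - R) / t) hγ1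
  have h6 : B - R < (Complex.abs γ) ^ j * t := by
    rw [div_lt_iff₀ htpos] at hj; linarith
  have h7 := grow j
  have h8 : Complex.abs (u (k + j)) ≤ B := hB (k + j)
  linarith

lemma rat_bound (β α : ℝ) (γ : ℂ) (φ : ℚ⟮β⟯ →ₐ[ℚ] ℂ) (hαK : α ∈ ℚ⟮β⟯)
    (hγ1 : 1 < Complex.abs γ) (hφβ : φ (AdjoinSimple.gen ℚ β) = γ)
    (hper : ∀ x : ℚ, (x : ℝ) ∈ Set.Icc (-α / (β - 1)) ((1 - α) / (β - 1)) →
      ∃ m n : ℕ, n < m ∧ (Tplus β α)^[m] (x : ℝ) = (Tplus β α)^[n] (x : ℝ))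
    (q : ℚ) (hq : (q : ℝ) ∈ Set.Icc (-α / (β - 1)) ((1 - α) / (β - 1))) (k : ℕ) :
    Complex.abs ((q : ℂ) + cconst β α γ φ hαK - Ssum β α (q:ℝ) γ k) ≤
      (1 / (Complex.abs γ - 1)) * ((Complex.abs γ)⁻¹) ^ k := by
  have hqK : (q : ℝ) ∈ ℚ⟮β⟯ := SubfieldClass.ratCast_mem _ q
  have hid := u_ident β α γ φ hαK hγ1 hφβ hqK k
  rw [PhiR_rat] at hid
  have hle := abs_le_R0 β α γ φ hαK hγ1 hφβ hqK (hper q hq) k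
  calc Complex.abs ((q : ℂ) + cconst β α γ φ hαK - Ssum β α (q:ℝ) γ k)
      = Complex.abs ((γ⁻¹) ^ k * (PhiR β φ ((Tplus β α)^[k] (q:ℝ)) + cconst β α γ φ hαK)) := by
        rw [hid]
    _ = ((Complex.abs γ)⁻¹) ^ k *
          Complex.abs (PhiR β φ ((Tplus β α)^[k] (q:ℝ)) + cconst β α γ φ hαK) := by
        rw [map_mul, map_pow, map_inv₀]
    _ ≤ ((Complex.abs γ)⁻¹) ^ k * (1 / (Complex.abs γ - 1)) := by
        apply mul_le_mul_of_nonneg_left hle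
        positivity
    _ = (1 / (Complex.abs γ - 1)) * ((Complex.abs γ)⁻¹) ^ k := by ring

lemma approx (β α : ℝ) (hβ1 : 1 < β) (y : ℝ) (hyr : y < (1 - α) / (β - 1)) (k : ℕ) :
    ∃ δ : ℝ, 0 < δ ∧ y + δ ≤ (1 - α) / (β - 1) ∧ ∀ w, y < w → w < y + δ →
      ((∀ i, i ≤ k → (Tplus β α)^[i] w = (Tplus β α)^[i] y + β ^ i * (w - y)) ∧
       (∀ i, i < k → dgt β α w i = dgt β α y i)) := by
  induction k with
  | zero =>
      refine ⟨(1 - α) / (β - 1) - y, by linarith, by linarith, ?_⟩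
      intro w hw1 hw2
      constructor
      · intro i hi
        interval_cases i
        simp
      · intro i hi; omega
  | succ k IH =>
      obtain ⟨δ, hδpos, hδle, H⟩ := IH
      by_cases hc : (Tplus β α)^[k] y < (1 - α) / β
      · have hβk : (0:ℝ) < β ^ k := pow_pos (by linarith) k
        refine ⟨min δ (((1 - α) / β - (Tplus β α)^[k] y) / β ^ k),
          lt_min hδpos (div_pos (by linarith) hβk), ?_, ?_⟩
        · have h0 : min δ (((1 - α) / β - (Tplus β α)^[k] y) / β ^ k) ≤ δ := min_le_left _ _
          linarith
        intro w hw1 hw2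
        have hw2' : w < y + δ := by
          have h0 : min δ (((1 - α) / β - (Tplus β α)^[k] y) / β ^ k) ≤ δ := min_le_left _ _
          linarith
        obtain ⟨Hf, Hd⟩ := H w hw1 hw2'
        have hwk : (Tplus β α)^[k] w = (Tplus β α)^[k] y + β ^ k * (w - y) :=
          Hf k (le_refl k)
        have hwklt : (Tplus β α)^[k] w < (1 - α) / β := by
          rw [hwk]
          have h1 : w - y < min δ (((1 - α) / β - (Tplus β α)^[k] y) / β ^ k) := by linarith
          have h2 := lt_of_lt_of_le h1 (min_le_right _ _)
          have h3 : β ^ k * (w - y) < β ^ k * (((1 - α) / β - (Tplus β α)^[k] y) / β ^ k) :=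
            mul_lt_mul_of_pos_left h2 hβk
          rw [mul_div_cancel₀ _ (ne_of_gt hβk)] at h3
          linarith
        have hdk : dgt β α w k = dgt β α y k := by
          unfold dgt
          rw [if_pos hwklt, if_pos hc]
        refine ⟨?_, ?_⟩
        · intro i hi
          by_cases h : i ≤ k
          · exact Hf i h
          · have hik : i = k + 1 := by omega
            subst hik
            rw [iterate_step, iterate_step, hdk, hwk, pow_succ]
            ring
        · intro i hi
          by_cases h : i < k
          · exact Hd i h
          · have hik : i = k := by omega
            subst hik; exact hdk
      · refine ⟨δ, hδpos, hδle, ?_⟩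
        intro w hw1 hw2
        obtain ⟨Hf, Hd⟩ := H w hw1 hw2
        have hβk : (0:ℝ) < β ^ k := pow_pos (by linarith) k
        have hwk : (Tplus β α)^[k] w = (Tplus β α)^[k] y + β ^ k * (w - y) :=
          Hf k (le_refl k)
        have hwkge : ¬ ((Tplus β α)^[k] w < (1 - α) / β) := by
          push_neg at hc ⊢
          rw [hwk]
          nlinarith
        have hdk : dgt β α w k = dgt β α y k := by
          unfold dgt
          rw [if_neg hwkge, if_neg hc]
        refine ⟨?_, ?_⟩
        · intro i hi
          by_cases h : i ≤ k
          · exact Hf i h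
          · have hik : i = k + 1 := by omega
            subst hik
            rw [iterate_step, iterate_step, hdk, hwk, pow_succ]
            ring
        · intro i hi
          by_cases h : i < k
          · exact Hd i h
          · have hik : i = k := by omega
            subst hik; exact hdk

/-- If every rational in `J_{β,α}` is eventually periodic under `T⁺_{β,α}`,
then every Galois conjugate `γ ≠ β` of `β` has modulus at most `1`; that is,
`β` is a Pisot or Salem number. -/
theorem rationals_preperiodic_implies_pisot_or_salem (β : ℝ)
    (hβ : β ∈ Set.Ioo (1 : ℝ) 2) (hint : IsIntegral ℤ β)
    (α : ℝ) (hα : α ∈ Set.Ioo (0 : ℝ) (2 - β))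
    (hαQ : α ∈ Algebra.adjoin ℚ ({β} : Set ℝ))
    (hper : ∀ x : ℚ, (x : ℝ) ∈ Set.Icc (-α / (β - 1)) ((1 - α) / (β - 1)) →
      ∃ m n : ℕ, n < m ∧ (Tplus β α)^[m] (x : ℝ) = (Tplus β α)^[n] (x : ℝ)) :
    ∀ γ : ℂ, Polynomial.aeval γ (minpoly ℚ β) = 0 → γ ≠ (β : ℂ) →
      ‖γ‖ ≤ 1 := by
  
  intro γ hroot hne
  by_contra hcon
  push_neg at hcon
  obtain ⟨hβ1, hβ2⟩ := hβ
  obtain ⟨hα0, hα2⟩ := hα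
  have hQint : IsIntegral ℚ β := hint.tower_top
  have hmemroot : γ ∈ (minpoly ℚ β).aroots ℂ := by
    rw [Polynomial.mem_aroots]; exact ⟨minpoly.ne_zero hQint, hroot⟩
  set φ : ℚ⟮β⟯ →ₐ[ℚ] ℂ := (algHomAdjoinIntegralEquiv ℚ hQint).symm ⟨γ, hmemroot⟩ with hφdef
  have hφβ : φ (AdjoinSimple.gen ℚ β) = γ :=
    algHomAdjoinIntegralEquiv_symm_apply_gen ℚ hQint _
  have hαK : α ∈ ℚ⟮β⟯ := IntermediateField.algebra_adjoin_le_adjoin ℚ {β} hαQ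
  have hb1 : (0:ℝ) < β - 1 := by linarith
  have hβ0 : (0:ℝ) < β := by linarith
  have hr1 : 1 < (1 - α) / (β - 1) := by
    rw [lt_div_iff₀ hb1]; linarith
  have hl0 : -α / (β - 1) < 0 := div_neg_of_neg_of_pos (by linarith) hb1
  have hg1 : (1:ℝ) < Complex.abs γ := hcon
  have hR0 : (0:ℝ) < 1 / (Complex.abs γ - 1) := by
    apply div_pos one_pos; linarith
  have key : ∀ y : ℝ, y ∈ ℚ⟮β⟯ → -α / (β - 1) ≤ y → y < (1 - α) / (β - 1) →
      (∃ m n : ℕ, n < m ∧ (Tplus β α)^[m] y = (Tplus β α)^[n] y) →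
      PhiR β φ y = (y : ℂ) := by
    intro y hyK hyl hyr hp
    obtain ⟨B, hB0, hB⟩ := exists_bound β α γ φ hαK hp
    have main : ∀ k : ℕ, Complex.abs (PhiR β φ y - (y:ℂ)) ≤
        (B + 1 + 1 / (Complex.abs γ - 1)) * ((Complex.abs γ)⁻¹)^k := by
      intro k
      obtain ⟨δ, hδpos, hδle, H⟩ := approx β α hβ1 y hyr k
      have hgik : (0:ℝ) < ((Complex.abs γ)⁻¹)^k := by positivity
      obtain ⟨q, hq1, hq2⟩ := exists_rat_btwn
        (show y < min (y + δ) (y + ((Complex.abs γ)⁻¹)^k) by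
          apply lt_min <;> linarith)
      have hq2a : (q:ℝ) < y + δ := lt_of_lt_of_le hq2 (min_le_left _ _)
      have hq2b : (q:ℝ) < y + ((Complex.abs γ)⁻¹)^k := lt_of_lt_of_le hq2 (min_le_right _ _)
      obtain ⟨Hf, Hd⟩ := H q hq1 hq2a
      have hqIcc : (q:ℝ) ∈ Set.Icc (-α / (β - 1)) ((1 - α) / (β - 1)) :=
        ⟨le_trans hyl hq1.le, by linarith⟩
      have hSeq : Ssum β α (q:ℝ) γ k = Ssum β α y γ k := by
        unfold Ssum; apply Finset.sum_congr rfl; intro i hi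
        rw [Hd i (Finset.mem_range.mp hi)]
      have h1 := rat_bound β α γ φ hαK hg1 hφβ hper q hqIcc k
      have h2 : Complex.abs ((y:ℂ) + cconst β α γ φ hαK - Ssum β α y γ k) ≤
          (1 + 1 / (Complex.abs γ - 1)) * ((Complex.abs γ)⁻¹)^k := by
        have hsplit : (y:ℂ) + cconst β α γ φ hαK - Ssum β α y γ k =
            ((y:ℂ) - (q:ℂ)) + ((q:ℂ) + cconst β α γ φ hαK - Ssum β α (q:ℝ) γ k) := by
          rw [hSeq]; ring
        rw [hsplit]
        refine le_trans (Complex.abs.add_le _ _) ?_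
        have ha : Complex.abs ((y:ℂ) - (q:ℂ)) ≤ ((Complex.abs γ)⁻¹)^k := by
          rw [show ((y:ℂ) - (q:ℂ)) = ((y - (q:ℝ) : ℝ) : ℂ) by push_cast; ring,
            Complex.abs_ofReal, abs_le]
          constructor <;> linarith
        calc Complex.abs ((y:ℂ) - (q:ℂ)) +
              Complex.abs ((q:ℂ) + cconst β α γ φ hαK - Ssum β α (q:ℝ) γ k)
            ≤ ((Complex.abs γ)⁻¹)^k + (1 / (Complex.abs γ - 1)) * ((Complex.abs γ)⁻¹)^k :=
              add_le_add ha h1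
          _ = (1 + 1 / (Complex.abs γ - 1)) * ((Complex.abs γ)⁻¹)^k := by ring
      have h3 : Complex.abs (PhiR β φ y + cconst β α γ φ hαK - Ssum β α y γ k) ≤
          B * ((Complex.abs γ)⁻¹)^k := by
        rw [u_ident β α γ φ hαK hg1 hφβ hyK k, map_mul, map_pow, map_inv₀]
        calc (Complex.abs γ)⁻¹ ^ k *
              Complex.abs (PhiR β φ ((Tplus β α)^[k] y) + cconst β α γ φ hαK)
            ≤ (Complex.abs γ)⁻¹ ^ k * B := by
              apply mul_le_mul_of_nonneg_left (hB k); positivity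
          _ = B * (Complex.abs γ)⁻¹ ^ k := by ring
      have h4 : PhiR β φ y - (y:ℂ) =
          (PhiR β φ y + cconst β α γ φ hαK - Ssum β α y γ k) -
          ((y:ℂ) + cconst β α γ φ hαK - Ssum β α y γ k) := by ring
      rw [h4]
      calc Complex.abs ((PhiR β φ y + cconst β α γ φ hαK - Ssum β α y γ k) -
              ((y:ℂ) + cconst β α γ φ hαK - Ssum β α y γ k))
          ≤ Complex.abs (PhiR β φ y + cconst β α γ φ hαK - Ssum β α y γ k) +
            Complex.abs ((y:ℂ) + cconst β α γ φ hαK - Ssum β α y γ k) :=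
            by simpa [Complex.norm_eq_abs] using norm_sub_le (PhiR β φ y + cconst β α γ φ hαK - Ssum β α y γ k) ((y:ℂ) + cconst β α γ φ hαK - Ssum β α y γ k)
        _ ≤ B * ((Complex.abs γ)⁻¹)^k +
            (1 + 1 / (Complex.abs γ - 1)) * ((Complex.abs γ)⁻¹)^k := add_le_add h3 h2
        _ = (B + 1 + 1 / (Complex.abs γ - 1)) * ((Complex.abs γ)⁻¹)^k := by ring
    by_contra hne2
    have ht : 0 < Complex.abs (PhiR β φ y - (y:ℂ)) :=
      AbsoluteValue.pos _ (sub_ne_zero.mpr hne2)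
    obtain ⟨k, hk⟩ := pow_unbounded_of_one_lt
      ((B + 1 + 1 / (Complex.abs γ - 1)) / Complex.abs (PhiR β φ y - (y:ℂ))) hg1
    rw [div_lt_iff₀ ht] at hk
    have hmk := main k
    have hgkpos : (0:ℝ) < (Complex.abs γ)^k := by positivity
    have hfin : (B + 1 + 1 / (Complex.abs γ - 1)) * ((Complex.abs γ)⁻¹)^k <
        Complex.abs (PhiR β φ y - (y:ℂ)) := by
      rw [inv_pow, mul_inv_lt_iff₀ hgkpos]
      linarith
    linarith
  have happ : ∀ z : ℚ, (0:ℝ) ≤ (z:ℝ) → (z:ℝ) ≤ 1 →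
      γ * ((((z:ℝ) + 1 - α)/β : ℝ) : ℂ) = (z:ℂ) + 1 - φ ⟨α, hαK⟩ := by
    intro z hz0 hz1
    have hzK : (z:ℝ) ∈ ℚ⟮β⟯ := SubfieldClass.ratCast_mem _ z
    have hβK : β ∈ ℚ⟮β⟯ := IntermediateField.mem_adjoin_simple_self ℚ β
    have hyK : ((z:ℝ) + 1 - α)/β ∈ ℚ⟮β⟯ :=
      div_mem (sub_mem (add_mem hzK (one_mem _)) hαK) hβK
    have hycut : (1 - α)/β ≤ ((z:ℝ) + 1 - α)/β := by
      exact (div_le_div_iff_of_pos_right hβ0).mpr (by linarith)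
    have cutpos : (0:ℝ) < (1 - α)/β := div_pos (by linarith) hβ0
    have hyl : -α / (β - 1) ≤ ((z:ℝ) + 1 - α)/β := by linarith
    have hrmul : ((1 - α) / (β - 1)) * (β - 1) = 1 - α := div_mul_cancel₀ _ (ne_of_gt hb1)
    have hyr : ((z:ℝ) + 1 - α)/β < (1 - α) / (β - 1) := by
      rw [div_lt_iff₀ hβ0]
      nlinarith [hr1]
    have hTy : Tplus β α (((z:ℝ) + 1 - α)/β) = (z:ℝ) := by
      unfold Tplus
      rw [if_neg (not_lt.mpr hycut)]
      field_simp
      ring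
    have hzIcc : (z:ℝ) ∈ Set.Icc (-α / (β - 1)) ((1 - α) / (β - 1)) :=
      ⟨by linarith, by linarith⟩
    obtain ⟨m, n, hnm, hmn⟩ := hper z hzIcc
    have hp : ∃ m' n' : ℕ, n' < m' ∧
        (Tplus β α)^[m'] (((z:ℝ) + 1 - α)/β) = (Tplus β α)^[n'] (((z:ℝ) + 1 - α)/β) := by
      refine ⟨m+1, n+1, by omega, ?_⟩
      rw [Function.iterate_succ_apply, Function.iterate_succ_apply, hTy]
      exact hmn
    have hkey := key (((z:ℝ) + 1 - α)/β) hyK hyl hyr hp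
    have hKeq : (AdjoinSimple.gen ℚ β) * ⟨((z:ℝ) + 1 - α)/β, hyK⟩ =
        (⟨(z:ℝ), hzK⟩ + 1 - ⟨α, hαK⟩ : ℚ⟮β⟯) := by
      ext
      push_cast
      show β * (((z:ℝ) + 1 - α)/β) = (z:ℝ) + 1 - α
      field_simp
    have hφeq := congrArg φ hKeq
    rw [map_mul, hφβ, map_sub, map_add, map_one] at hφeq
    rw [← PhiR_mem β φ hyK, hkey] at hφeq
    have hφz : φ ⟨(z:ℝ), hzK⟩ = (z:ℂ) := by
      rw [← PhiR_mem β φ hzK, PhiR_rat]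
    rw [hφz] at hφeq
    exact hφeq
  have h0 := happ 0 (by norm_num) (by norm_num)
  have h1 := happ 1 (by norm_num) (by norm_num)
  have hβC : (β:ℂ) ≠ 0 := by
    exact_mod_cast ne_of_gt hβ0
  have hsub : γ * ((((1:ℝ) + 1 - α)/β : ℝ) : ℂ) - γ * ((((0:ℝ) + 1 - α)/β : ℝ) : ℂ) = 1 := by
    rw [show (((1:ℚ):ℝ)) = (1:ℝ) by norm_num] at h1
    rw [show (((0:ℚ):ℝ)) = (0:ℝ) by norm_num] at h0
    rw [h0, h1]
    push_cast
    ring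
  have hfrac : ((((1:ℝ) + 1 - α)/β : ℝ) : ℂ) - ((((0:ℝ) + 1 - α)/β : ℝ) : ℂ) = 1/(β:ℂ) := by
    push_cast [hβ0.ne']
    field_simp
    ring
  have hγβ : γ = (β:ℂ) := by
    have h5 : γ * (1/(β:ℂ)) = 1 := by
      rw [← hfrac, mul_sub]; exact hsub
    field_simp at h5
    exact h5
  exact hne hγβ
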